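/- Every chordless graph on at least one vertex contains a vertex of degree at most 2, and consequently every chordless graph is 3-colorable. -/

import Mathlib

open SimpleGraph

/-- A graph is chordless if every cycle is induced: any edge between two vertices of a
cycle is an edge of the cycle. -/
def SimpleGraph.IsChordless {V : Type*} (G : SimpleGraph V) : Prop :=
  ∀ (v : V) (c : G.Walk v v), c.IsCycle →
    ∀ u w : V, u ∈ c.support → w ∈ c.support → G.Adj u w → s(u, w) ∈ c.edges

section Aux

variable {V : Type*} {G : SimpleGraph V}

/-- In a path starting at `v`, there is at most one edge incident to `v`. -/
lemma start_edge_unique {v u x y : V} (p : G.Walk v u) (hp : p.IsPath)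
    (hx : s(v, x) ∈ p.edges) (hy : s(v, y) ∈ p.edges) : x = y := by
  cases p with
  | nil => simp at hx
  | @cons _ b _ h q =>
    rw [SimpleGraph.Walk.cons_isPath_iff] at hp
    have key : ∀ z, s(v, z) ∈ (SimpleGraph.Walk.cons h q).edges → z = b := by
      intro z hz
      rw [SimpleGraph.Walk.edges_cons, List.mem_cons] at hz
      rcases hz with hz | hz
      · rw [Sym2.eq_iff] at hz
        rcases hz with ⟨-, h1⟩ | ⟨h1, -⟩
        · exact h1
        · exact absurd h1 (G.ne_of_adj h)
      · exact absurd (SimpleGraph.Walk.fst_mem_support_of_mem_edges q hz) hp.2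
    exact (key x hx).trans (key y hy).symm

lemma mem_takeUntil_of_indexOf_lt [DecidableEq V] {v u x w : V}
    (p : G.Walk v u) (hw : w ∈ p.support) (hx : x ∈ p.support)
    (hlt : p.support.idxOf x < p.support.idxOf w) :
    x ∈ (p.takeUntil w hw).support := by
  by_contra hxt
  have hsup : p.support = (p.takeUntil w hw).support ++ (p.dropUntil w hw).support.tail := by
    rw [← SimpleGraph.Walk.support_append, p.take_spec hw]
  have h1 : (p.takeUntil w hw).support.length ≤ p.support.idxOf x := by
    rw [hsup, List.idxOf_append_of_notMem hxt]
    exact Nat.le_add_right _ _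
  have h2 : p.support.idxOf w < (p.takeUntil w hw).support.length := by
    rw [hsup, List.idxOf_append_of_mem (p.takeUntil w hw).end_mem_support]
    exact List.idxOf_lt_length_iff.2 (SimpleGraph.Walk.end_mem_support _)
  omega

/-- Every nonempty finite chordless graph has a vertex of degree at most `2`. -/
lemma exists_degree_le_two [Fintype V] (hc : G.IsChordless) (hne : Nonempty V) :
    ∃ v : V, (G.neighborSet v).ncard ≤ 2 := by
  classical
  by_contra hdeg
  push_neg at hdeg
  obtain ⟨v0⟩ := hne
  set P : ℕ → Prop := fun n => ∃ (a c : V) (p : G.Walk a c), p.IsPath ∧ p.length = n with hP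
  have hP0 : P 0 := ⟨v0, v0, SimpleGraph.Walk.nil, SimpleGraph.Walk.IsPath.nil, rfl⟩
  have hbdd : ∀ n, P n → n < Fintype.card V := by
    rintro n ⟨a, c, p, hp, rfl⟩; exact hp.length_lt
  obtain ⟨a, c, p, hp, hlen⟩ :=
    Nat.findGreatest_spec (P := P) (n := Fintype.card V) (Nat.zero_le _) hP0
  have hmax : ∀ (a' c' : V) (q : G.Walk a' c'), q.IsPath → q.length ≤ p.length := by
    intro a' c' q hq
    by_contra hgt
    push_neg at hgt
    rw [hlen] at hgt
    exact Nat.findGreatest_is_greatest hgt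
      (le_of_lt (hbdd _ ⟨a', c', q, hq, rfl⟩)) ⟨a', c', q, hq, rfl⟩
  have hNsub : ∀ x, G.Adj a x → x ∈ p.support := by
    intro x hax
    by_contra hxs
    have hq : (SimpleGraph.Walk.cons (G.adj_symm hax) p).IsPath := hp.cons hxs
    have := hmax _ _ _ hq
    rw [SimpleGraph.Walk.length_cons] at this
    omega
  have hdega : 2 < (G.neighborSet a).ncard := hdeg a
  cases p with
  | nil =>
    have hsub : G.neighborSet a ⊆ ∅ := by
      intro x hx
      have hxm := hNsub x hx
      simp only [SimpleGraph.Walk.support_nil, List.mem_singleton] at hxm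
      exact absurd hxm.symm (G.ne_of_adj hx)
    rw [Set.subset_empty_iff.mp hsub] at hdega
    simp at hdega
  | @cons _ d _ hadj q =>
    set p' : G.Walk a c := SimpleGraph.Walk.cons hadj q with hp'
    set l : List V := p'.support with hl
    have hll : l = a :: q.support := by
      simp [hl, hp', SimpleGraph.Walk.support_cons]
    have hNfin : (G.neighborSet a).Finite := Set.toFinite _
    have hNne : (G.neighborSet a).Nonempty := by
      rcases Set.eq_empty_or_nonempty (G.neighborSet a) with h | h
      · rw [h] at hdega; simp at hdega
      · exact h
    obtain ⟨w, hwN, hwmax⟩ := Set.exists_max_image (G.neighborSet a)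
      (fun x => l.idxOf x) hNfin hNne
    have hidx1 : ∀ x ∈ G.neighborSet a, 1 ≤ l.idxOf x := by
      intro x hx
      rw [hll, List.idxOf_cons_ne _ (G.ne_of_adj hx)]
      omega
    have hdN : d ∈ G.neighborSet a := hadj
    have hidxd : l.idxOf d = 1 := by
      rw [hll, List.idxOf_cons_ne _ (G.ne_of_adj hadj)]
      rw [q.support_eq_cons, List.idxOf_cons_self]
    -- pick a third neighbor x different from w and d
    have hnsub : ¬ (G.neighborSet a ⊆ {w, d}) := by
      intro hsub
      have h1 := Set.ncard_le_ncard hsub (Set.toFinite _)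
      have h2 : ({w, d} : Set V).ncard ≤ 2 := by
        refine (Set.ncard_insert_le _ _).trans ?_
        simp [Set.ncard_singleton]
      omega
    obtain ⟨x, hxN, hxwd⟩ := Set.not_subset.mp hnsub
    simp only [Set.mem_insert_iff, Set.mem_singleton_iff, not_or] at hxwd
    obtain ⟨hxw, hxd⟩ := hxwd
    have hxl : x ∈ l := hNsub x hxN
    have hwl : w ∈ l := hNsub w hwN
    have hxlt : l.idxOf x < l.idxOf w := by
      have hle := hwmax x hxN
      have hne : l.idxOf x ≠ l.idxOf w := fun h =>
        hxw ((List.idxOf_inj hxl).mp h)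
      omega
    have hidxw2 : 2 ≤ l.idxOf w := by
      have := hidx1 x hxN
      omega
    -- the key uniqueness: any edge of p' incident to a goes to d
    have hfirst : s(a, d) ∈ p'.edges := by
      simp [hp', SimpleGraph.Walk.edges_cons]
    have hkey : ∀ z, s(a, z) ∈ p'.edges → z = d := fun z hz =>
      start_edge_unique p' hp hz hfirst
    -- build the cycle
    set t : G.Walk a w := p'.takeUntil w hwl with ht
    have hvw : G.Adj a w := hwN
    set cyc : G.Walk a a := SimpleGraph.Walk.cons hvw t.reverse with hcycdef
    have hcyc : cyc.IsCycle := by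
      rw [hcycdef, SimpleGraph.Walk.cons_isCycle_iff]
      refine ⟨(hp.takeUntil hwl).reverse, ?_⟩
      intro hmem
      rw [SimpleGraph.Walk.edges_reverse, List.mem_reverse] at hmem
      have hmem' : s(a, w) ∈ p'.edges := SimpleGraph.Walk.edges_takeUntil_subset _ _ hmem
      have := hkey w hmem'
      rw [this, hidxd] at hidxw2
      omega
    have hxt : x ∈ t.support := mem_takeUntil_of_indexOf_lt p' hwl hxl hxlt
    have hxc : x ∈ cyc.support := by
      rw [hcycdef, SimpleGraph.Walk.support_cons, List.mem_cons]
      right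
      rw [SimpleGraph.Walk.support_reverse, List.mem_reverse]
      exact hxt
    have hac : a ∈ cyc.support := cyc.start_mem_support
    have hchord := hc a cyc hcyc a x hac hxc hxN
    rw [hcycdef, SimpleGraph.Walk.edges_cons, List.mem_cons] at hchord
    rcases hchord with hchord | hchord
    · rw [Sym2.eq_iff] at hchord
      rcases hchord with ⟨-, h1⟩ | ⟨h1, -⟩
      · exact hxw h1
      · exact G.ne_of_adj hvw h1
    · rw [SimpleGraph.Walk.edges_reverse, List.mem_reverse] at hchord
      have hmem' : s(a, x) ∈ p'.edges := SimpleGraph.Walk.edges_takeUntil_subset _ _ hchord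
      exact hxd (hkey x hmem')

/-- Chordlessness passes to induced subgraphs. -/
lemma isChordless_induce (hc : G.IsChordless) (s : Set V) :
    (G.induce s).IsChordless := by
  intro v c hcyc u w hu hw hadj
  set f : G.induce s ↪g G := SimpleGraph.Embedding.induce s with hf
  have hcyc' : (c.map f.toHom).IsCycle := hcyc.map (f := f.toHom) (fun _ _ hab => f.injective hab)
  have hu' : (u : V) ∈ (c.map f.toHom).support := by
    rw [SimpleGraph.Walk.support_map]
    exact List.mem_map.2 ⟨u, hu, rfl⟩
  have hw' : (w : V) ∈ (c.map f.toHom).support := by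
    rw [SimpleGraph.Walk.support_map]
    exact List.mem_map.2 ⟨w, hw, rfl⟩
  have hadj' : G.Adj (u : V) (w : V) := hadj
  have hedge := hc (v : V) (c.map f.toHom) hcyc' (u : V) (w : V) hu' hw' hadj'
  erw [SimpleGraph.Walk.edges_map, List.mem_map] at hedge
  obtain ⟨e, he, hee⟩ := hedge
  have : e = s(u, w) := by
    apply Sym2.map.injective f.injective
    rw [Sym2.map_pair_eq]
    exact hee
  rwa [this] at he

/-- Every finite chordless graph is 3-colorable. -/
lemma chordless_colorable_aux : ∀ (n : ℕ) {V : Type*} [Fintype V] (G : SimpleGraph V),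
    Fintype.card V ≤ n → G.IsChordless → G.Colorable 3 := by
  intro n
  induction n with
  | zero =>
    intro V _ G hcard _
    have : IsEmpty V :=
      Fintype.card_eq_zero_iff.mp (le_antisymm hcard (Nat.zero_le _))
    exact SimpleGraph.Colorable.of_isEmpty 3
  | succ n ih =>
    intro V _ G hcard hc
    classical
    cases isEmpty_or_nonempty V with
    | inl h => exact SimpleGraph.Colorable.of_isEmpty 3
    | inr hne =>
      obtain ⟨v, hv⟩ := exists_degree_le_two hc hne
      set s : Set V := {u | u ≠ v} with hs
      have hcards : Fintype.card s < Fintype.card V := by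
        refine Fintype.card_lt_of_injective_of_notMem (Subtype.val) Subtype.val_injective
          (b := v) ?_
        rintro ⟨⟨u, hu⟩, h⟩
        exact hu h
      have hGs : (G.induce s).IsChordless := isChordless_induce hc s
      obtain ⟨C⟩ := ih (G.induce s) (by omega) hGs
      set T : Set (Fin 3) := C '' {u : s | G.Adj v u.1} with hT
      have hTcard : T.ncard ≤ 2 := by
        have h1 : T.ncard ≤ ({u : s | G.Adj v u.1}).ncard :=
          Set.ncard_image_le (Set.toFinite _)
        have h2 : (Subtype.val '' {u : s | G.Adj v u.1}).ncard
            = ({u : s | G.Adj v u.1}).ncard :=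
          Set.ncard_image_of_injective _ Subtype.val_injective
        have h3 : Subtype.val '' {u : s | G.Adj v u.1} ⊆ G.neighborSet v := by
          rintro _ ⟨u, hu, rfl⟩; exact hu
        have h4 := Set.ncard_le_ncard h3 (Set.toFinite _)
        omega
      have hfresh : ∃ c0 : Fin 3, c0 ∉ T := by
        by_contra hall
        push_neg at hall
        have hTuniv : T = Set.univ := Set.eq_univ_of_forall hall
        rw [hTuniv, Set.ncard_univ, Nat.card_eq_fintype_card, Fintype.card_fin] at hTcard
        omega
      obtain ⟨c0, hc0⟩ := hfresh
      refine ⟨SimpleGraph.Coloring.mk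
        (fun u => if h : u = v then c0 else C ⟨u, h⟩) ?_⟩
      intro p q hpq
      by_cases hp : p = v <;> by_cases hq : q = v
      · subst hp; subst hq; exact absurd hpq (G.irrefl)
      · subst hp
        simp only [dif_pos rfl, dif_neg hq]
        intro heq
        exact hc0 ⟨⟨q, hq⟩, hpq, heq.symm⟩
      · subst hq
        simp only [dif_pos rfl, dif_neg hp]
        intro heq
        exact hc0 ⟨⟨p, hp⟩, G.adj_symm hpq, heq⟩
      · simp only [dif_neg hp, dif_neg hq]
        have hadj : (G.induce s).Adj ⟨p, hp⟩ ⟨q, hq⟩ := hpq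
        exact C.valid hadj

end Aux

/-- Every chordless graph on at least one vertex has a vertex of degree at most 2, and
every chordless graph is 3-colorable. -/
theorem chordless_min_degree_and_three_colorable {V : Type*} [Fintype V] (G : SimpleGraph V)
    (hc : G.IsChordless) :
    (Nonempty V → ∃ v : V, (G.neighborSet v).ncard ≤ 2) ∧ G.Colorable 3 := by
  exact ⟨fun hne => exists_degree_le_two hc hne,
    chordless_colorable_aux (Fintype.card V) G le_rfl hc⟩
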